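/- Let G be a simple star graph on n ≥ 2 vertices (one center vertex adjacent to the n−1 other vertices, with no other edges), with positive real edge weights. Then the distance matrix D(G) has exactly 1 positive eigenvalue and n−1 negative eigenvalues, i.e., its inertia is (1, 0, n−1). -/

import Mathlib

open Matrix

/-- Number of positive eigenvalues (with multiplicity) of a real symmetric matrix. -/
noncomputable def posEig {n : ℕ} {A : Matrix (Fin n) (Fin n) ℝ} (hA : A.IsHermitian) : ℕ :=
  Nat.card {i : Fin n // 0 < hA.eigenvalues i}

noncomputable def zeroEig {n : ℕ} {A : Matrix (Fin n) (Fin n) ℝ} (hA : A.IsHermitian) : ℕ :=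
  Nat.card {i : Fin n // hA.eigenvalues i = 0}

noncomputable def negEig {n : ℕ} {A : Matrix (Fin n) (Fin n) ℝ} (hA : A.IsHermitian) : ℕ :=
  Nat.card {i : Fin n // hA.eigenvalues i < 0}

/-- Total weight of a walk: sum of weights of its edges. -/
noncomputable def walkWeight {V : Type*} {G : SimpleGraph V} (w : Sym2 V → ℝ)
    {u v : V} (p : G.Walk u v) : ℝ :=
  (p.edges.map w).sum

/-- Weighted shortest-path distance. -/
noncomputable def wdist {V : Type*} (G : SimpleGraph V) (w : Sym2 V → ℝ) (u v : V) : ℝ :=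
  sInf {x | ∃ p : G.Walk u v, walkWeight w p = x}

/-- The distance matrix of a weighted graph on `Fin n`. -/
noncomputable def distMatrix {n : ℕ} (G : SimpleGraph (Fin n)) (w : Sym2 (Fin n) → ℝ) :
    Matrix (Fin n) (Fin n) ℝ :=
  Matrix.of fun i j => wdist G w i j

/-- The distance matrix of a weighted simple star on `n ≥ 2` vertices
(center `c`, positive edge weights) has inertia `(1, 0, n-1)`. -/
theorem star_inertia (n : ℕ) (hn : 2 ≤ n) (G : SimpleGraph (Fin n)) (c : Fin n)
    (hG : ∀ i j, G.Adj i j ↔ i ≠ j ∧ (i = c ∨ j = c))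
    (w : Sym2 (Fin n) → ℝ) (hw : ∀ e ∈ G.edgeSet, 0 < w e)
    (hD : (distMatrix G w).IsHermitian) :
    posEig hD = 1 ∧ zeroEig hD = 0 ∧ negEig hD = n - 1 := by
  classical
  set a : Fin n → ℝ := fun i => if i = c then 0 else w s(i, c) with ha
  have hadjc : ∀ i : Fin n, i ≠ c → G.Adj i c := fun i hi => (hG i c).mpr ⟨hi, Or.inr rfl⟩
  have hapos : ∀ i : Fin n, i ≠ c → 0 < a i := by
    intro i hi
    have : s(i, c) ∈ G.edgeSet := (SimpleGraph.mem_edgeSet G).mpr (hadjc i hi)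
    simp only [ha, if_neg hi]
    exact hw _ this
  have hanonneg : ∀ i : Fin n, 0 ≤ a i := by
    intro i
    by_cases hi : i = c
    · simp [ha, hi]
    · exact (hapos i hi).le
  have hac : a c = 0 := by simp [ha]
  -- the weight of any adjacent edge
  have hwe : ∀ u x : Fin n, G.Adj u x → w s(u, x) = a u + a x := by
    intro u x h
    obtain ⟨hux, hc⟩ := (hG u x).mp h
    rcases hc with rfl | rfl
    · have hx : x ≠ u := fun h' => hux h'.symm
      rw [Sym2.eq_swap]
      simp [ha, hx, hux]
    · simp [ha, hux]
  -- lower bound for any walk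
  have hlb : ∀ (u v : Fin n) (p : G.Walk u v),
      (if u = v then (0:ℝ) else a u + a v) ≤ walkWeight w p := by
    intro u v p
    induction p with
    | nil => simp [walkWeight]
    | @cons u x v h q ih =>
      have hcw : walkWeight w (SimpleGraph.Walk.cons h q) = w s(u, x) + walkWeight w q := by
        simp [walkWeight]
      rw [hcw, hwe u x h]
      by_cases huv : u = v <;> by_cases hxv : x = v <;>
        simp only [huv, hxv, if_pos, if_neg, ite_true, ite_false] at ih ⊢ <;>
        nlinarith [hanonneg u, hanonneg x, hanonneg v, ih]
  -- membership: the bound is attained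
  have hmem : ∀ u v : Fin n,
      (if u = v then (0:ℝ) else a u + a v) ∈ {x | ∃ p : G.Walk u v, walkWeight w p = x} := by
    intro u v
    by_cases huv : u = v
    · subst huv
      exact ⟨SimpleGraph.Walk.nil, by simp [walkWeight]⟩
    · rw [if_neg huv]
      by_cases hu : u = c
      · subst hu
        have hv : v ≠ u := fun h => huv h.symm
        refine ⟨SimpleGraph.Walk.cons ((hadjc v hv).symm) SimpleGraph.Walk.nil, ?_⟩
        simp [walkWeight, hwe u v ((hadjc v hv).symm)]
      · by_cases hv : v = c
        · subst hv
          refine ⟨SimpleGraph.Walk.cons (hadjc u hu) SimpleGraph.Walk.nil, ?_⟩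
          simp [walkWeight, hwe u v (hadjc u hu)]
        · have hvc : v ≠ c := hv
          refine ⟨SimpleGraph.Walk.cons (hadjc u hu)
            (SimpleGraph.Walk.cons ((hadjc v hvc).symm) SimpleGraph.Walk.nil), ?_⟩
          simp [walkWeight, hwe u c (hadjc u hu), hwe c v ((hadjc v hvc).symm), hac]
  -- explicit form of the distance matrix
  have dist_eq : ∀ i j : Fin n, distMatrix G w i j = if i = j then (0:ℝ) else a i + a j := by
    intro i j
    have : IsLeast {x | ∃ p : G.Walk i j, walkWeight w p = x}
        (if i = j then (0:ℝ) else a i + a j) := by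
      refine ⟨hmem i j, ?_⟩
      rintro x ⟨p, rfl⟩
      exact hlb i j p
    exact this.csInf_eq
  set μ : Fin n → ℝ := hD.eigenvalues with hμ
  -- trace = 0
  have htr0 : (distMatrix G w).trace = 0 := by
    rw [Matrix.trace]
    apply Finset.sum_eq_zero
    intro i _
    simp [Matrix.diag, dist_eq i i]
  have hsum : ∑ i, μ i = 0 := by
    rw [← htr0]
    conv_rhs => rw [hD.spectral_theorem, Unitary.conjStarAlgAut_apply]
    rw [Matrix.trace_mul_cycle]
    rw [show (star (hD.eigenvectorUnitary : Matrix (Fin n) (Fin n) ℝ)) *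
        (hD.eigenvectorUnitary : Matrix (Fin n) (Fin n) ℝ) = 1 from Unitary.coe_star_mul_self _]
    rw [Matrix.one_mul, Matrix.trace_diagonal]
    simp [hμ]
  -- quadratic form on hyperplane ∑ y = 0
  have hq : ∀ y : Fin n → ℝ, (∑ k, y k) = 0 →
      y ⬝ᵥ (distMatrix G w *ᵥ y) = -2 * ∑ i, a i * y i ^ 2 := by
    intro y hy
    have hrow : ∀ i, (distMatrix G w *ᵥ y) i = (∑ j, a j * y j) - 2 * (a i * y i) := by
      intro i
      have : (distMatrix G w *ᵥ y) i = ∑ j, (if i = j then (0:ℝ) else a i + a j) * y j := by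
        simp only [Matrix.mulVec, dotProduct]
        exact Finset.sum_congr rfl fun j _ => by rw [dist_eq i j]
      rw [this]
      have hsplit : ∀ j : Fin n, (if i = j then (0:ℝ) else a i + a j) * y j
          = (a i * y j + a j * y j) - (if j = i then (a i + a j) * y j else 0) := by
        intro j
        by_cases h : i = j
        · subst h; simp; ring
        · have h' : j ≠ i := fun h'' => h h''.symm
          simp [h, h']; ring
      rw [Finset.sum_congr rfl fun j _ => hsplit j, Finset.sum_sub_distrib,
        Finset.sum_ite_eq' Finset.univ i (fun j => (a i + a j) * y j)]
      rw [Finset.sum_add_distrib, ← Finset.mul_sum, hy]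
      simp
      ring
    calc y ⬝ᵥ (distMatrix G w *ᵥ y)
        = ∑ i, y i * ((∑ j, a j * y j) - 2 * (a i * y i)) := by
          simp only [dotProduct]
          exact Finset.sum_congr rfl fun i _ => by rw [hrow i]
      _ = (∑ i, y i) * (∑ j, a j * y j) - 2 * ∑ i, a i * y i ^ 2 := by
          rw [Finset.sum_congr rfl (fun i _ => mul_sub (y i) _ _), Finset.sum_sub_distrib,
            ← Finset.sum_mul, Finset.mul_sum, Finset.mul_sum]
          congr 1
          exact Finset.sum_congr rfl fun i _ => by ring
      _ = -2 * ∑ i, a i * y i ^ 2 := by rw [hy]; ring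
  have hneg : ∀ y : Fin n → ℝ, (∑ k, y k) = 0 → y ≠ 0 →
      y ⬝ᵥ (distMatrix G w *ᵥ y) < 0 := by
    intro y hy hy0
    rw [hq y hy]
    have hex : ∃ i : Fin n, i ≠ c ∧ y i ≠ 0 := by
      by_contra hcon
      push_neg at hcon
      apply hy0
      funext i
      by_cases hi : i = c
      · subst hi
        have : ∑ k, y k = y i := Finset.sum_eq_single i
          (fun b _ hb => hcon b hb) (fun h => absurd (Finset.mem_univ i) h)
        rw [this] at hy
        exact hy
      · exact hcon i hi
    obtain ⟨i, hic, hyi⟩ := hex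
    have hpos : 0 < ∑ i, a i * y i ^ 2 := by
      apply Finset.sum_pos' (fun j _ => mul_nonneg (hanonneg j) (sq_nonneg _))
      refine ⟨i, Finset.mem_univ i, ?_⟩
      have h2 : 0 < y i ^ 2 := by positivity
      exact mul_pos (hapos i hic) h2
    nlinarith
  -- eigenvector facts
  set B : Fin n → (Fin n → ℝ) := fun i => (hD.eigenvectorBasis i : Fin n → ℝ) with hB
  have hAB : ∀ i, distMatrix G w *ᵥ B i = μ i • B i := fun i => hD.mulVec_eigenvectorBasis i
  have hBo : ∀ i j, B i ⬝ᵥ B j = if i = j then (1:ℝ) else 0 := by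
    intro i j
    have h := orthonormal_iff_ite.mp hD.eigenvectorBasis.orthonormal i j
    rw [← h]
    simp [PiLp.inner_apply, dotProduct, hB, mul_comm]
  -- at most one nonnegative eigenvalue
  have key : ∀ i j : Fin n, i ≠ j → 0 ≤ μ i → 0 ≤ μ j → False := by
    intro i j hij hi hj
    set fi : ℝ := ∑ k, B i k with hfi
    set fj : ℝ := ∑ k, B j k with hfj
    obtain ⟨α, β, hab, habf⟩ : ∃ α β : ℝ, ¬(α = 0 ∧ β = 0) ∧ α * fi + β * fj = 0 := by
      by_cases h : fi = 0 ∧ fj = 0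
      · exact ⟨1, 0, by simp, by simp [h.1, h.2]⟩
      · refine ⟨fj, -fi, ?_, by ring⟩
        intro ⟨h1, h2⟩
        exact h ⟨by simpa using h2, h1⟩
    set y : Fin n → ℝ := α • B i + β • B j with hy
    have hysum : ∑ k, y k = 0 := by
      simp only [hy, Pi.add_apply, Pi.smul_apply, smul_eq_mul]
      rw [Finset.sum_add_distrib, ← Finset.mul_sum, ← Finset.mul_sum, ← hfi, ← hfj]
      exact habf
    have hyy : y ⬝ᵥ y = α ^ 2 + β ^ 2 := by
      simp only [hy, add_dotProduct, dotProduct_add,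
        smul_dotProduct, dotProduct_smul, hBo, if_pos rfl, if_neg hij,
        if_neg (Ne.symm hij), smul_eq_mul]
      norm_num
      ring
    have hy0 : y ≠ 0 := by
      intro h0
      have : α ^ 2 + β ^ 2 = 0 := by rw [← hyy, h0]; simp
      have hα : α = 0 := by nlinarith [sq_nonneg α, sq_nonneg β]
      have hβ : β = 0 := by nlinarith [sq_nonneg α, sq_nonneg β]
      exact hab ⟨hα, hβ⟩
    have hqy : y ⬝ᵥ (distMatrix G w *ᵥ y) = α ^ 2 * μ i + β ^ 2 * μ j := by
      have : distMatrix G w *ᵥ y = (α * μ i) • B i + (β * μ j) • B j := by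
        simp only [hy, Matrix.mulVec_add, Matrix.mulVec_smul, hAB, smul_smul]
      rw [this]
      simp only [hy, add_dotProduct, dotProduct_add,
        smul_dotProduct, dotProduct_smul, hBo, if_pos rfl, if_neg hij,
        if_neg (Ne.symm hij), smul_eq_mul]
      norm_num
      ring
    have h1 : y ⬝ᵥ (distMatrix G w *ᵥ y) < 0 := hneg y hysum hy0
    rw [hqy] at h1
    nlinarith [sq_nonneg α, sq_nonneg β]
  -- counting
  set P := Finset.univ.filter (fun i => 0 < μ i) with hP
  set Z := Finset.univ.filter (fun i => μ i = 0) with hZ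
  set N := Finset.univ.filter (fun i => μ i < 0) with hN
  set NN := Finset.univ.filter (fun i => 0 ≤ μ i) with hNN
  have hNNle : NN.card ≤ 1 := by
    apply Finset.card_le_one.mpr
    intro i hi j hj
    by_contra hij
    exact key i j hij (Finset.mem_filter.mp hi).2 (Finset.mem_filter.mp hj).2
  have hsplitcard : NN.card + N.card = n := by
    have := Finset.card_filter_add_card_filter_not
      (s := Finset.univ) (p := fun i : Fin n => 0 ≤ μ i)
    rw [Finset.card_univ, Fintype.card_fin] at this
    have h2 : (Finset.filter (fun i => ¬ 0 ≤ μ i) Finset.univ) = N := by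
      ext i
      simp [hN, not_le]
    rw [h2] at this
    exact this
  have hNne : N.Nonempty := by
    rw [← Finset.card_pos]
    omega
  obtain ⟨i0, hi0⟩ := hNne
  have hi0neg : μ i0 < 0 := (Finset.mem_filter.mp hi0).2
  have hPne : ∃ i, 0 < μ i := by
    by_contra hcon
    push_neg at hcon
    have : (∑ i, μ i) < ∑ _i : Fin n, (0:ℝ) :=
      Finset.sum_lt_sum (fun i _ => hcon i) ⟨i0, Finset.mem_univ i0, hi0neg⟩
    simp [hsum] at this
  have hPZ : P ∪ Z = NN := by
    ext i
    simp only [hP, hZ, hNN, Finset.mem_union, Finset.mem_filter, Finset.mem_univ, true_and]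
    constructor
    · rintro (h | h)
      · exact h.le
      · exact h.ge
    · intro h
      rcases lt_or_eq_of_le h with h' | h'
      · exact Or.inl h'
      · exact Or.inr h'.symm
  have hPZdisj : Disjoint P Z := by
    rw [Finset.disjoint_left]
    intro i hiP hiZ
    have h1 := (Finset.mem_filter.mp hiP).2
    have h2 := (Finset.mem_filter.mp hiZ).2
    rw [h2] at h1
    exact lt_irrefl 0 h1
  have hPZcard : P.card + Z.card = NN.card := by
    rw [← Finset.card_union_of_disjoint hPZdisj, hPZ]
  have hPpos : 1 ≤ P.card := by
    obtain ⟨i, hi⟩ := hPne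
    apply Finset.card_pos.mpr
    exact ⟨i, Finset.mem_filter.mpr ⟨Finset.mem_univ i, hi⟩⟩
  have hPcard : P.card = 1 := le_antisymm (by omega) hPpos
  have hZcard : Z.card = 0 := by omega
  have hNcard : N.card = n - 1 := by omega
  -- convert Nat.card to Finset.card
  have hconv : ∀ p : Fin n → Prop, Nat.card {i : Fin n // p i}
      = (Finset.univ.filter p).card := by
    intro p
    rw [Nat.card_eq_fintype_card, Fintype.card_subtype]
  refine ⟨?_, ?_, ?_⟩
  · rw [posEig, hconv]; exact hPcard
  · rw [zeroEig, hconv]; exact hZcard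
  · rw [negEig, hconv]; exact hNcard
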